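/- Every minimal strongly connected digraph of order n ≥ 3 can be reduced to the 2-cycle C_2 by a sequence of n − 2 reductions, where a reduction is the inverse of an internal or external expansion by a single vertex, and each intermediate digraph is minimal strongly connected. -/

import Mathlib

/-- Reachability in a digraph given by its arc set `A`. -/
def Reach {α : Type*} (A : Finset (α × α)) (u v : α) : Prop :=
  Relation.ReflTransGen (fun a b => (a, b) ∈ A) u v

/-- A digraph with vertex set `V` and arc set `A` is strongly connected if
every vertex reaches every other vertex by a directed path. -/
def StrongConn {α : Type*} (V : Finset α) (A : Finset (α × α)) : Prop :=
  ∀ u ∈ V, ∀ v ∈ V, Reach A u v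

/-- Minimal strongly connected: strongly connected and removing any arc
destroys strong connectivity. -/
def MSC {α : Type*} [DecidableEq α] (V : Finset α) (A : Finset (α × α)) : Prop :=
  StrongConn V A ∧ ∀ a ∈ A, ¬ StrongConn V (A.erase a)

/-- `l` is a directed (simple) path from `u` to `v` in the digraph with arc set `A`. -/
def IsPath {α : Type*} (A : Finset (α × α)) (u v : α) (l : List α) : Prop :=
  l.Chain' (fun a b => (a, b) ∈ A) ∧ l.head? = some u ∧ l.getLast? = some v ∧ l.Nodup

/-- `(u,v)` is a transitive arc: it is an arc and there is a directed path from
`u` to `v` distinct from the single arc `(u,v)`. -/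
def TransArc {α : Type*} (A : Finset (α × α)) (u v : α) : Prop :=
  (u, v) ∈ A ∧ ∃ l, IsPath A u v l ∧ l ≠ [u, v]

/-- `l` (a list of distinct vertices, of length ≥ 2) is a directed cycle:
consecutive vertices are joined by arcs, and there is an arc from the last
vertex back to the first. -/
def IsCycle {α : Type*} (A : Finset (α × α)) (l : List α) : Prop :=
  ∃ h : l ≠ [], l.Nodup ∧ 2 ≤ l.length ∧
    List.Chain (fun a b => (a, b) ∈ A) (l.getLast h) l

/-- Well-formedness: nonempty vertex set, arcs join vertices of `V`, no loops. -/
def GoodDigraph {α : Type*} (V : Finset α) (A : Finset (α × α)) : Prop :=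
  V.Nonempty ∧ ∀ a ∈ A, a.1 ∈ V ∧ a.2 ∈ V ∧ a.1 ≠ a.2

/-- Outdegree of a vertex. -/
def outdeg {α : Type*} [DecidableEq α] (A : Finset (α × α)) (v : α) : ℕ :=
  (A.filter (fun a => a.1 = v)).card

/-- Indegree of a vertex. -/
def indeg {α : Type*} [DecidableEq α] (A : Finset (α × α)) (v : α) : ℕ :=
  (A.filter (fun a => a.2 = v)).card

/-- A linear vertex has indegree and outdegree equal to 1. -/
def LinearVertex {α : Type*} [DecidableEq α] (A : Finset (α × α)) (v : α) : Prop :=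
  indeg A v = 1 ∧ outdeg A v = 1

/-- The digraph is a directed `n`-cycle: its vertices can be listed
`v₁, …, vₙ` so that the arcs are exactly `(v₁,v₂), …, (vₙ,v₁)`. -/
def IsCycleDigraph {α : Type*} [DecidableEq α] (V : Finset α) (A : Finset (α × α)) : Prop :=
  ∃ l : List α, l.Nodup ∧ 2 ≤ l.length ∧ l.toFinset = V ∧ A = (l.zip (l.rotate 1)).toFinset

/-- A directed tree: every arc is accompanied by its reverse, and the
underlying undirected graph (on the vertex set `V`) is a tree. -/
def IsDirTree {α : Type*} [DecidableEq α] (V : Finset α) (A : Finset (α × α)) : Prop :=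
  (∀ u v : α, (u, v) ∈ A → (v, u) ∈ A) ∧
  (SimpleGraph.fromRel (fun a b : {x // x ∈ V} => ((a : α), (b : α)) ∈ A)).IsTree

/-- `(V', A')` is the (internal or external) expansion of `(V, A)` by the new
vertex `v`.  Internal: an arc `(u,w)` is replaced by `(u,v)` and `(v,w)`.
External: the arcs `(u,v)` and `(v,w)` are added for vertices `u, w ∈ V`. -/
def IsExpansionBy {α : Type*} [DecidableEq α] (v : α) (V : Finset α) (A : Finset (α × α))
    (V' : Finset α) (A' : Finset (α × α)) : Prop :=
  v ∉ V ∧ V' = insert v V ∧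
    ((∃ u w, (u, w) ∈ A ∧ A' = insert (u, v) (insert (v, w) (A.erase (u, w)))) ∨
     (∃ u ∈ V, ∃ w ∈ V, A' = insert (u, v) (insert (v, w) A)))

section Helpers
variable {α : Type*} [DecidableEq α]

lemma reach_mono {A B : Finset (α × α)} (h : A ⊆ B) {x y : α} (hr : Reach A x y) : Reach B x y :=
  Relation.ReflTransGen.mono (fun a b hab => h hab) _ _ hr

lemma reach_subst {A B : Finset (α × α)} {u w : α}
    (hAB : ∀ e ∈ A, e = (u, w) ∨ e ∈ B) (huw : Reach B u w) {x y : α}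
    (hr : Reach A x y) : Reach B x y := by
  induction hr with
  | refl => exact .refl
  | tail h harc ih =>
      rcases hAB _ harc with h1 | h2
      · rw [Prod.ext_iff] at h1
        obtain ⟨h1, h2⟩ := h1
        simp only at h1 h2
        subst h1; subst h2
        exact ih.trans huw
      · exact ih.tail h2

lemma reach_of_chain' {A : Finset (α × α)} : ∀ {l : List α} {x y : α},
    l.IsChain (fun a b => (a, b) ∈ A) → l.head? = some x → l.getLast? = some y → Reach A x y := by
  intro l
  induction l with
  | nil => intro x y _ h; simp at h
  | cons a t ih =>
    intro x y hc hh hl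
    cases t with
    | nil =>
      simp at hh hl; subst hh; subst hl; exact .refl
    | cons b t' =>
      simp only [List.head?_cons, Option.some.injEq] at hh
      subst hh
      rw [List.isChain_cons_cons] at hc
      rw [List.getLast?_cons_cons] at hl
      exact Relation.ReflTransGen.head hc.1 (ih hc.2 (by simp) hl)

lemma exists_chain'_of_reach {A : Finset (α × α)} {x y : α} (h : Reach A x y) :
    ∃ l : List α, l ≠ [] ∧ l.IsChain (fun a b => (a, b) ∈ A) ∧
      l.head? = some x ∧ l.getLast? = some y := by
  obtain ⟨l, hl₁, hl₂⟩ := List.exists_isChain_cons_of_relationReflTransGen h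
  refine ⟨x :: l, by simp, hl₁, by simp, ?_⟩
  rw [List.getLast?_eq_getLast (List.cons_ne_nil _ _), hl₂]

lemma exists_dup_split {l : List α} (h : ¬ l.Nodup) :
    ∃ (x : α) (l₁ l₂ l₃ : List α), l = l₁ ++ x :: l₂ ++ x :: l₃ := by
  induction l with
  | nil => simp at h
  | cons a t ih =>
    by_cases ha : a ∈ t
    · obtain ⟨s, u, rfl⟩ := List.append_of_mem ha
      exact ⟨a, [], s, u, by simp⟩
    · have ht : ¬ t.Nodup := fun hn => h (List.nodup_cons.2 ⟨ha, hn⟩)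
      obtain ⟨x, l₁, l₂, l₃, rfl⟩ := ih ht
      exact ⟨x, a :: l₁, l₂, l₃, by simp⟩

lemma chain'_dedup {r : α → α → Prop} : ∀ (n : ℕ) (l : List α), l.length ≤ n → l.IsChain r →
    l ≠ [] →
    ∃ l', l'.IsChain r ∧ l'.head? = l.head? ∧ l'.getLast? = l.getLast? ∧ l'.Nodup ∧ l' ≠ [] ∧
      ∀ x ∈ l', x ∈ l := by
  intro n
  induction n with
  | zero =>
    intro l hl _ hne
    simp [List.length_eq_zero_iff] at hl
    exact absurd hl hne
  | succ n ih =>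
    intro l hl hc hne
    by_cases hnd : l.Nodup
    · exact ⟨l, hc, rfl, rfl, hnd, hne, fun x hx => hx⟩
    · obtain ⟨x, l₁, l₂, l₃, rfl⟩ := exists_dup_split hnd
      have heq : l₁ ++ x :: l₂ ++ x :: l₃ = l₁ ++ x :: (l₂ ++ x :: l₃) := by simp
      rw [heq] at hc hl ⊢
      have hs1 := List.isChain_split.1 hc
      have hx2 : (x :: l₂ ++ x :: l₃).IsChain r := by simpa using hs1.2
      have hs2 := List.isChain_split.1 hx2
      have hc1 : (l₁ ++ x :: l₃).IsChain r := List.isChain_split.2 ⟨hs1.1, hs2.2⟩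
      have hlen : (l₁ ++ x :: l₃).length ≤ n := by
        simp only [List.length_append, List.length_cons] at hl ⊢
        omega
      obtain ⟨l', h1, h2, h3, h4, h5, h6⟩ := ih _ hlen hc1 (by simp)
      refine ⟨l', h1, ?_, ?_, h4, h5, ?_⟩
      · rw [h2]; cases l₁ <;> simp
      · rw [h3, List.getLast?_append_cons, List.getLast?_append_cons]
        cases l₃ with
        | nil =>
          rw [(show x :: (l₂ ++ [x]) = (x :: l₂) ++ x :: [] by simp), List.getLast?_append_cons]
        | cons c t =>
          rw [(show x :: (l₂ ++ x :: c :: t) = (x :: l₂) ++ x :: c :: t by simp),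
            List.getLast?_append_cons]
      · intro a ha
        have := h6 a ha
        simp only [List.mem_append, List.mem_cons] at this ⊢
        tauto


lemma reach_to_path {A : Finset (α × α)} {x y : α} (h : Reach A x y) :
    ∃ l : List α, l ≠ [] ∧ l.IsChain (fun a b => (a, b) ∈ A) ∧ l.head? = some x ∧
      l.getLast? = some y ∧ l.Nodup := by
  obtain ⟨l, hne, hc, hh, hl⟩ := exists_chain'_of_reach h
  obtain ⟨l', h1, h2, h3, h4, h5, _⟩ := chain'_dedup l.length l le_rfl hc hne
  exact ⟨l', h5, h1, by rw [h2, hh], by rw [h3, hl], h4⟩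

lemma exists_crossing {A : Finset (α × α)} {W : Finset α} {x y : α} (h : Reach A x y)
    (hx : x ∈ W) (hy : y ∉ W) : ∃ p q, (p, q) ∈ A ∧ p ∈ W ∧ q ∉ W := by
  revert hy
  induction h with
  | refl => exact fun hy => absurd hx hy
  | @tail b c hr harc ih =>
    intro hc
    by_cases hb : b ∈ W
    · exact ⟨b, c, harc, hb, hc⟩
    · exact ih hb

lemma truncate_walk {A : Finset (α × α)} {W : Finset α} :
    ∀ (l : List α), l.IsChain (fun a b => (a, b) ∈ A) → ∀ {p t : α}, l.head? = some p →
      l.getLast? = some t → p ∉ W → t ∈ W →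
      ∃ (ps : List α) (b : α), (ps ++ [b]).IsChain (fun a b => (a, b) ∈ A) ∧
        ps.head? = some p ∧ ps ≠ [] ∧ (∀ x ∈ ps, x ∉ W) ∧ b ∈ W ∧ ∀ x ∈ ps, x ∈ l := by
  intro l
  induction l with
  | nil => intro _ p t hh; simp at hh
  | cons a r ih =>
    intro hc p t hh hl hp ht
    simp only [List.head?_cons, Option.some.injEq] at hh
    subst hh
    cases r with
    | nil =>
      simp only [List.getLast?_singleton, Option.some.injEq] at hl
      subst hl; exact absurd ht hp
    | cons c r' =>
      rw [List.isChain_cons_cons] at hc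
      by_cases hcW : c ∈ W
      · exact ⟨[a], c, List.isChain_pair.2 hc.1, by simp, by simp,
          by simpa using hp, hcW, by simp⟩
      · rw [List.getLast?_cons_cons] at hl
        obtain ⟨ps, b, h1, h2, h3, h4, h5, h6⟩ := ih hc.2 (by simp) hl hcW ht
        refine ⟨a :: ps, b, ?_, by simp, by simp, ?_, h5, ?_⟩
        · rw [(show (a :: ps) ++ [b] = a :: (ps ++ [b]) by simp), List.isChain_cons]
          refine ⟨?_, h1⟩
          intro z hz
          rw [List.head?_append_of_ne_nil _ h3, h2] at hz
          simp only [Option.mem_def, Option.some.injEq] at hz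
          subst hz; exact hc.1
        · intro z hz
          rcases List.mem_cons.1 hz with rfl | hz2
          · exact hp
          · exact h4 z hz2
        · intro z hz
          rcases List.mem_cons.1 hz with rfl | hz2
          · simp
          · simp [h6 z hz2]

lemma walk_subset {V : Finset α} {A : Finset (α × α)}
    (hg : ∀ a ∈ A, a.1 ∈ V ∧ a.2 ∈ V ∧ a.1 ≠ a.2) :
    ∀ (l : List α), l.IsChain (fun a b => (a, b) ∈ A) → ∀ {h0 : α}, l.head? = some h0 →
      h0 ∈ V → ∀ x ∈ l, x ∈ V := by
  intro l
  induction l with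
  | nil => simp
  | cons a r ih =>
    intro hc h0 hh h0V x hx
    simp only [List.head?_cons, Option.some.injEq] at hh
    subst hh
    rcases List.mem_cons.1 hx with rfl | hx2
    · exact h0V
    · cases r with
      | nil => simp at hx2
      | cons c r' =>
        rw [List.isChain_cons_cons] at hc
        exact ih hc.2 (by simp) (hg _ hc.1).2.1 x hx2

lemma mem_zip_tail_split : ∀ {l : List α} {x y : α}, (x, y) ∈ l.zip l.tail →
    ∃ l₁ l₂, l = l₁ ++ x :: y :: l₂ := by
  intro l
  induction l with
  | nil => simp
  | cons a r ih =>
    intro x y h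
    cases r with
    | nil => simp at h
    | cons b t =>
      simp only [List.tail_cons, List.zip_cons_cons, List.mem_cons] at h
      rcases h with h1 | h2
      · rw [Prod.mk.injEq] at h1
        exact ⟨[], t, by simp [h1.1.symm, h1.2.symm]⟩
      · obtain ⟨l₁, l₂, heq⟩ := ih h2
        exact ⟨a :: l₁, l₂, by rw [heq]; simp⟩

lemma chain'_mem_zip : ∀ (l : List α), l.IsChain (fun x y => (x, y) ∈ l.zip l.tail) := by
  intro l
  induction l with
  | nil => simp
  | cons a r ih =>
    rw [List.isChain_cons]
    constructor
    · intro y hy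
      cases r with
      | nil => simp at hy
      | cons c t =>
        simp only [List.head?_cons, Option.mem_def, Option.some.injEq] at hy
        subst hy
        simp
    · refine ih.imp ?_
      intro x y hxy
      cases r with
      | nil => simp at hxy
      | cons c t => simp only [List.tail_cons, List.zip_cons_cons, List.mem_cons]; right; exact hxy

lemma chain'_reach_of_mem {A : Finset (α × α)} : ∀ {l : List α},
    l.IsChain (fun a b => (a, b) ∈ A) → ∀ {x h0 : α}, l.head? = some h0 → x ∈ l →
      Reach A h0 x := by
  intro l
  induction l with
  | nil => simp
  | cons a r ih =>
    intro hc x h0 hh hx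
    simp only [List.head?_cons, Option.some.injEq] at hh
    subst hh
    rcases List.mem_cons.1 hx with rfl | hx2
    · exact .refl
    · cases r with
      | nil => simp at hx2
      | cons c t =>
        rw [List.isChain_cons_cons] at hc
        exact Relation.ReflTransGen.head hc.1 (ih hc.2 (by simp) hx2)

lemma chain'_reach_last {A : Finset (α × α)} : ∀ {l : List α},
    l.IsChain (fun a b => (a, b) ∈ A) → ∀ {x y : α}, x ∈ l → l.getLast? = some y →
      Reach A x y := by
  intro l
  induction l with
  | nil => simp
  | cons a r ih =>
    intro hc x y hx hl
    rcases List.mem_cons.1 hx with rfl | hx2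
    · exact reach_of_chain' hc (by simp) hl
    · cases r with
      | nil => simp at hx2
      | cons c t =>
        rw [List.isChain_cons_cons] at hc
        rw [List.getLast?_cons_cons] at hl
        exact ih hc.2 hx2 hl

lemma zip_snd_unique {l : List α} {c d x : α} {t : List α} (hl : l = c :: d :: t)
    (h : (x, d) ∈ l.zip l.tail) (hd1 : d ∉ t) (hd2 : d ≠ c) : x = c := by
  subst hl
  obtain ⟨l₁, l₂, heq⟩ := mem_zip_tail_split h
  cases l₁ with
  | nil =>
    simp only [List.nil_append, List.cons.injEq] at heq
    exact heq.1.symm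
  | cons e l₁' =>
    simp only [List.cons_append, List.cons.injEq] at heq
    obtain ⟨rfl, heq2⟩ := heq
    cases l₁' with
    | nil =>
      simp only [List.nil_append, List.cons.injEq] at heq2
      obtain ⟨rfl, heq3⟩ := heq2
      exact absurd (heq3 ▸ (@List.mem_cons_self _ d l₂)) hd1
    | cons f r =>
      simp only [List.cons_append, List.cons.injEq] at heq2
      obtain ⟨rfl, heq3⟩ := heq2
      exact absurd (heq3 ▸ (List.mem_append_right r (by simp))) hd1

lemma zip_fst_unique {l : List α} {c d e x : α} {t : List α} (hl : l = c :: d :: e :: t)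
    (h : (d, x) ∈ l.zip l.tail) (hd1 : d ∉ e :: t) (hd2 : d ≠ c) : x = e := by
  subst hl
  obtain ⟨l₁, l₂, heq⟩ := mem_zip_tail_split h
  cases l₁ with
  | nil =>
    simp only [List.nil_append, List.cons.injEq] at heq
    exact absurd heq.1.symm hd2
  | cons f r =>
    simp only [List.cons_append, List.cons.injEq] at heq
    obtain ⟨rfl, heq2⟩ := heq
    cases r with
    | nil =>
      simp only [List.nil_append, List.cons.injEq] at heq2
      exact heq2.2.1.symm
    | cons g r' =>
      simp only [List.cons_append, List.cons.injEq] at heq2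
      obtain ⟨rfl, heq3⟩ := heq2
      refine absurd ?_ hd1
      rw [heq3]
      exact List.mem_append_right r' (by simp)


lemma zip_mem_of_chain' {A : Finset (α × α)} {l : List α} {x y : α}
    (hc : l.IsChain (fun a b => (a, b) ∈ A)) (h : (x, y) ∈ l.zip l.tail) : (x, y) ∈ A := by
  obtain ⟨l₁, l₂, rfl⟩ := mem_zip_tail_split h
  have : [x, y] <:+: l₁ ++ x :: y :: l₂ := ⟨l₁, l₂, by simp⟩
  exact List.isChain_pair.1 (hc.infix this)

lemma exists_linear_vertex {V : Finset α} {A : Finset (α × α)} (hg : GoodDigraph V A)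
    (h : MSC V A) (hn : 3 ≤ V.card) : ∃ v, LinearVertex A v := by
  classical
  obtain ⟨x0, hx0⟩ := hg.1
  set S := V.powerset.filter
    (fun W => W ≠ V ∧ W.Nonempty ∧
      StrongConn W (A.filter (fun e => e.1 ∈ W ∧ e.2 ∈ W))) with hS
  have hSne : S.Nonempty := by
    refine ⟨{x0}, Finset.mem_filter.2 ⟨Finset.mem_powerset.2 (by simpa using hx0), ?_, ⟨x0, by simp⟩, ?_⟩⟩
    · intro hcon
      rw [← hcon] at hn
      simp at hn
    · intro u hu v hv
      simp only [Finset.mem_singleton] at hu hv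
      subst hu; subst hv
      exact .refl
  obtain ⟨W, hWS, hWmax⟩ := S.exists_max_image Finset.card hSne
  rw [hS, Finset.mem_filter, Finset.mem_powerset] at hWS
  obtain ⟨hWV, hWne, hWnon, hWsc⟩ := hWS
  obtain ⟨z, hzV, hzW⟩ := Finset.exists_of_ssubset (lt_of_le_of_ne hWV hWne)
  obtain ⟨a1, ha1⟩ := hWnon
  obtain ⟨a0, p, harc, ha0, hpW⟩ := exists_crossing (h.1 a1 (hWV ha1) z hzV) ha1 hzW
  have hpV : p ∈ V := (hg.2 _ harc).2.1
  -- walk from p back to a0, truncated at first entry into W, then dedup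
  obtain ⟨l, hlne, hlc, hlh, hll⟩ := exists_chain'_of_reach (h.1 p hpV a0 (hWV ha0))
  obtain ⟨ps, b, hps1, hps2, hps3, hps4, hbW, hps6⟩ := truncate_walk l hlc hlh hll hpW ha0
  obtain ⟨l', hl'1, hl'2, hl'3, hl'4, hl'5, hl'6⟩ :=
    chain'_dedup (ps ++ [b]).length (ps ++ [b]) le_rfl hps1 (by simp)
  rw [List.getLast?_concat] at hl'3
  set qs := l'.dropLast with hqs
  have hql : l' = qs ++ [b] := (List.dropLast_append_getLast? b hl'3).symm
  have hqnodup : qs.Nodup ∧ b ∉ qs := by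
    have := hql ▸ hl'4
    rw [List.nodup_append] at this
    exact ⟨this.1, fun hb => this.2.2 b hb b (by simp) rfl⟩
  have hqne : qs ≠ [] := by
    intro hcon
    rw [hql, hcon] at hl'2
    rw [List.head?_append_of_ne_nil _ hps3, hps2] at hl'2
    simp at hl'2
    exact hpW (hl'2 ▸ hbW)
  have hqhead : qs.head? = some p := by
    have := hl'2
    rw [hql, List.head?_append_of_ne_nil _ hqne, List.head?_append_of_ne_nil _ hps3, hps2] at this
    exact this
  have hqmem : ∀ x ∈ qs, x ∈ ps := by
    intro x hx
    have hxl' : x ∈ l' := by rw [hql]; exact List.mem_append_left _ hx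
    rcases List.mem_append.1 (hl'6 x hxl') with h1 | h2
    · exact h1
    · simp only [List.mem_singleton] at h2
      exact absurd (h2 ▸ hx) hqnodup.2
  have hqW : ∀ x ∈ qs, x ∉ W := fun x hx => hps4 x (hqmem x hx)
  have hqV : ∀ x ∈ qs, x ∈ V := by
    intro x hx
    exact walk_subset hg.2 l hlc hlh hpV x (hps6 x (hqmem x hx))
  have hqchain : (qs ++ [b]).IsChain (fun a b => (a, b) ∈ A) := hql ▸ hl'1
  -- the handle L
  set L := a0 :: (qs ++ [b]) with hL
  have hLc : L.IsChain (fun a b => (a, b) ∈ A) := by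
    rw [hL, List.isChain_cons]
    refine ⟨?_, hqchain⟩
    intro y hy
    rw [List.head?_append_of_ne_nil _ hqne, hqhead] at hy
    simp only [Option.mem_def, Option.some.injEq] at hy
    subst hy; exact harc
  set W' := W ∪ qs.toFinset with hW'
  set B' := A.filter (fun e => e.1 ∈ W ∧ e.2 ∈ W) ∪ (L.zip L.tail).toFinset with hB'
  have hB'A : B' ⊆ A := by
    intro e he
    rcases Finset.mem_union.1 he with h1 | h2
    · exact (Finset.mem_filter.1 h1).1
    · exact zip_mem_of_chain' hLc (by rwa [← List.mem_toFinset, Prod.mk.eta])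
  have hLB' : L.IsChain (fun a b => (a, b) ∈ B') := by
    refine (chain'_mem_zip L).imp ?_
    intro x y hxy
    exact Finset.mem_union_right _ (List.mem_toFinset.2 hxy)
  have hWreach : ∀ x ∈ W, ∀ y ∈ W, Reach B' x y := fun x hx y hy =>
    reach_mono Finset.subset_union_left (hWsc x hx y hy)
  have hLmem : ∀ x ∈ L, x ∈ W' := by
    intro x hx
    rcases List.mem_cons.1 hx with rfl | hx2
    · exact Finset.mem_union_left _ ha0
    · rcases List.mem_append.1 hx2 with h1 | h2
      · exact Finset.mem_union_right _ (List.mem_toFinset.2 h1)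
      · simp only [List.mem_singleton] at h2
        exact h2 ▸ Finset.mem_union_left _ hbW
  have hW'sc : ∀ x ∈ W', ∀ y ∈ W', Reach B' x y := by
    have hxb : ∀ x ∈ W', Reach B' x b := by
      intro x hx
      rcases Finset.mem_union.1 hx with h1 | h2
      · exact hWreach x h1 b hbW
      · refine chain'_reach_last (hLB'.tail) (List.mem_append_left _ (List.mem_toFinset.1 h2)) ?_
        exact List.getLast?_concat
    have hay : ∀ y ∈ W', Reach B' a0 y := by
      intro y hy
      rcases Finset.mem_union.1 hy with h1 | h2
      · exact hWreach a0 ha0 y h1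
      · exact chain'_reach_of_mem hLB' (by rw [hL]; simp) (by rw [hL]; exact List.mem_cons_of_mem _ (List.mem_append_left _ (List.mem_toFinset.1 h2)))
    intro x hx y hy
    exact ((hxb x hx).trans (hWreach b hbW a0 ha0)).trans (hay y hy)
  have hW'V : W' ⊆ V := by
    intro x hx
    rcases Finset.mem_union.1 hx with h1 | h2
    · exact hWV h1
    · exact hqV x (List.mem_toFinset.1 h2)
  have hW'eq : W' = V := by
    by_contra hne
    have hW'S : W' ∈ S := by
      rw [hS, Finset.mem_filter, Finset.mem_powerset]
      refine ⟨hW'V, hne, ⟨a0, Finset.mem_union_left _ ha0⟩, ?_⟩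
      intro x hx y hy
      refine reach_mono ?_ (hW'sc x hx y hy)
      intro e he
      rw [Finset.mem_filter]
      refine ⟨hB'A he, ?_, ?_⟩
      · rcases Finset.mem_union.1 he with h1 | h2
        · exact Finset.mem_union_left _ (Finset.mem_filter.1 h1).2.1
        · obtain ⟨l₁, l₂, heq⟩ := mem_zip_tail_split
            ((by rwa [← List.mem_toFinset, Prod.mk.eta]) : (e.1, e.2) ∈ L.zip L.tail)
          exact hLmem e.1 (by rw [heq]; simp)
      · rcases Finset.mem_union.1 he with h1 | h2
        · exact Finset.mem_union_left _ (Finset.mem_filter.1 h1).2.2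
        · obtain ⟨l₁, l₂, heq⟩ := mem_zip_tail_split
            ((by rwa [← List.mem_toFinset, Prod.mk.eta]) : (e.1, e.2) ∈ L.zip L.tail)
          exact hLmem e.2 (by rw [heq]; simp)
    have hcard := hWmax W' hW'S
    have hp : p ∈ W' := by
      refine Finset.mem_union_right _ (List.mem_toFinset.2 ?_)
      cases hq : qs with
      | nil => exact absurd hq hqne
      | cons c t => rw [hq] at hqhead; simp at hqhead; rw [hqhead]; simp
    have : W ⊂ W' := ⟨Finset.subset_union_left, fun hsub => hpW (hsub hp)⟩
    exact absurd hcard (not_le.2 (Finset.card_lt_card this))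
  have hscB' : StrongConn V B' := fun x hx y hy => hW'sc x (hW'eq ▸ hx) y (hW'eq ▸ hy)
  have hAB' : A = B' := by
    refine Finset.Subset.antisymm ?_ hB'A
    intro e he
    by_contra heB
    have hsub : B' ⊆ A.erase e := by
      intro x hx
      exact Finset.mem_erase.2 ⟨fun hxe => heB (hxe ▸ hx), hB'A hx⟩
    exact h.2 e he (fun u hu v hv => reach_mono hsub (hscB' u hu v hv))
  -- now p is linear
  obtain ⟨qs', hqs'⟩ : ∃ qs', qs = p :: qs' := by
    cases hq : qs with
    | nil => exact absurd hq hqne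
    | cons c t => rw [hq] at hqhead; simp at hqhead; exact ⟨t, by rw [hqhead]⟩
  have hLexp : L = a0 :: p :: (qs' ++ [b]) := by rw [hL, hqs']; simp
  have hpnotin : p ∉ qs' ++ [b] := by
    intro hcon
    rcases List.mem_append.1 hcon with h1 | h2
    · have := hqnodup.1
      rw [hqs', List.nodup_cons] at this
      exact this.1 h1
    · simp only [List.mem_singleton] at h2
      exact hpW (h2 ▸ hbW)
  have hpa0 : p ≠ a0 := fun hcon => hpW (hcon ▸ ha0)
  refine ⟨p, ?_, ?_⟩
  · -- indeg
    have hfilter : A.filter (fun e => e.2 = p) = {(a0, p)} := by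
      apply Finset.Subset.antisymm
      · intro e he
        rw [Finset.mem_filter] at he
        obtain ⟨heA, hep⟩ := he
        rw [hAB'] at heA
        rcases Finset.mem_union.1 heA with h1 | h2
        · exact absurd (hep ▸ (Finset.mem_filter.1 h1).2.2) hpW
        · have hzip : (e.1, p) ∈ L.zip L.tail := by
            rw [← hep, Prod.mk.eta]
            exact List.mem_toFinset.1 h2
          have := zip_snd_unique hLexp hzip hpnotin hpa0
          rw [Finset.mem_singleton, ← Prod.mk.eta (p := e), this, hep]
      · intro e he
        rw [Finset.mem_singleton] at he
        subst he
        rw [Finset.mem_filter, hAB']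
        refine ⟨Finset.mem_union_right _ (List.mem_toFinset.2 ?_), rfl⟩
        rw [hLexp]
        simp
    rw [indeg, hfilter, Finset.card_singleton]
  · -- outdeg
    obtain ⟨c0, rest, hcr⟩ : ∃ c0 rest, qs' ++ [b] = c0 :: rest := by
      cases hq : qs' ++ [b] with
      | nil => simp at hq
      | cons c t => exact ⟨c, t, rfl⟩
    have hLexp2 : L = a0 :: p :: c0 :: rest := by rw [hLexp, hcr]
    have hfilter : A.filter (fun e => e.1 = p) = {(p, c0)} := by
      apply Finset.Subset.antisymm
      · intro e he
        rw [Finset.mem_filter] at he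
        obtain ⟨heA, hep⟩ := he
        rw [hAB'] at heA
        rcases Finset.mem_union.1 heA with h1 | h2
        · exact absurd (hep ▸ (Finset.mem_filter.1 h1).2.1) hpW
        · have hzip : (p, e.2) ∈ L.zip L.tail := by
            rw [← hep, Prod.mk.eta]
            exact List.mem_toFinset.1 h2
          have := zip_fst_unique hLexp2 hzip (hcr ▸ hpnotin) hpa0
          rw [Finset.mem_singleton, ← Prod.mk.eta (p := e), this, hep]
      · intro e he
        rw [Finset.mem_singleton] at he
        subst he
        rw [Finset.mem_filter, hAB']
        refine ⟨Finset.mem_union_right _ (List.mem_toFinset.2 ?_), rfl⟩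
        rw [hLexp2]
        simp
    rw [outdeg, hfilter, Finset.card_singleton]


lemma reach_rewrite_fwd {A A₀ : Finset (α × α)} {v u w : α}
    (hin : ∀ c, (c, v) ∈ A → c = u) (hout : ∀ c, (v, c) ∈ A → c = w)
    (hvv : u ≠ v)
    (hsub : ∀ e ∈ A, e.1 ≠ v → e.2 ≠ v → (e ∈ A₀ ∨ e = (u, w)))
    (hstep : Reach A₀ u w) {x y : α} (hr : Reach A x y) (hx : x ≠ v) :
    (y = v → Reach A₀ x u) ∧ (y ≠ v → Reach A₀ x y) := by
  induction hr with
  | refl => exact ⟨fun hcon => absurd hcon hx, fun _ => .refl⟩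
  | @tail c y2 hr harc ih =>
    constructor
    · intro hy; subst hy
      have hcu : c = u := hin c harc
      subst hcu
      exact ih.2 hvv
    · intro hy
      by_cases hcv : c = v
      · subst hcv
        have hw : y2 = w := hout _ harc
        subst hw
        exact (ih.1 rfl).trans hstep
      · rcases hsub _ harc hcv hy with h1 | h2
        · exact (ih.2 hcv).tail h1
        · have hc : c = u := congrArg Prod.fst h2
          have hy2 : y2 = w := congrArg Prod.snd h2
          subst hc; subst hy2
          exact (ih.2 hcv).trans hstep

lemma exists_reduction {V : Finset α} {A : Finset (α × α)} (hg : GoodDigraph V A)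
    (h : MSC V A) (hn : 3 ≤ V.card) :
    ∃ (v : α) (V₀ : Finset α) (A₀ : Finset (α × α)), v ∈ V ∧ V₀ = V.erase v ∧
      IsExpansionBy v V₀ A₀ V A ∧ GoodDigraph V₀ A₀ ∧ MSC V₀ A₀ := by
  classical
  obtain ⟨v, hvin, hvout⟩ := exists_linear_vertex hg h hn
  obtain ⟨u, hu⟩ : ∃ u, (u, v) ∈ A := by
    have hne : (A.filter (fun e => e.2 = v)).Nonempty := by
      rw [← Finset.card_pos, (show (A.filter (fun e => e.2 = v)).card = indeg A v from rfl), hvin]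
      norm_num
    obtain ⟨e, he⟩ := hne
    rw [Finset.mem_filter] at he
    exact ⟨e.1, by rw [show (e.1, v) = e by rw [← he.2]]; exact he.1⟩
  obtain ⟨w, hw⟩ : ∃ w, (v, w) ∈ A := by
    have hne : (A.filter (fun e => e.1 = v)).Nonempty := by
      rw [← Finset.card_pos, (show (A.filter (fun e => e.1 = v)).card = outdeg A v from rfl), hvout]
      norm_num
    obtain ⟨e, he⟩ := hne
    rw [Finset.mem_filter] at he
    exact ⟨e.2, by rw [show (v, e.2) = e by rw [← he.2]]; exact he.1⟩
  have hin : ∀ c, (c, v) ∈ A → c = u := by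
    intro c hc
    have h1 : (c, v) ∈ A.filter (fun e => e.2 = v) := Finset.mem_filter.2 ⟨hc, rfl⟩
    have h2 : (u, v) ∈ A.filter (fun e => e.2 = v) := Finset.mem_filter.2 ⟨hu, rfl⟩
    have := Finset.card_le_one.1 (le_of_eq hvin) _ h1 _ h2
    exact congrArg Prod.fst this
  have hout : ∀ c, (v, c) ∈ A → c = w := by
    intro c hc
    have h1 : (v, c) ∈ A.filter (fun e => e.1 = v) := Finset.mem_filter.2 ⟨hc, rfl⟩
    have h2 : (v, w) ∈ A.filter (fun e => e.1 = v) := Finset.mem_filter.2 ⟨hw, rfl⟩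
    have := Finset.card_le_one.1 (le_of_eq hvout) _ h1 _ h2
    exact congrArg Prod.snd this
  have huv_ne : u ≠ v := (hg.2 _ hu).2.2
  have hvw_ne : v ≠ w := (hg.2 _ hw).2.2
  have hvV : v ∈ V := (hg.2 _ hu).2.1
  have huV : u ∈ V := (hg.2 _ hu).1
  have hwV : w ∈ V := (hg.2 _ hw).2.1
  set V₀ := V.erase v with hV₀
  set A₂ := (A.erase (u, v)).erase (v, w) with hA₂
  have havoid : ∀ e ∈ A₂, e ∈ A ∧ e.1 ≠ v ∧ e.2 ≠ v := by
    intro e he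
    rw [Finset.mem_erase, Finset.mem_erase] at he
    obtain ⟨hevw, heuv, heA⟩ := he
    refine ⟨heA, ?_, ?_⟩
    · intro hcon
      apply hevw
      have : e.2 = w := hout e.2 (by rw [← hcon, Prod.mk.eta]; exact heA)
      rw [← hcon, ← this, Prod.mk.eta]
    · intro hcon
      apply heuv
      have : e.1 = u := hin e.1 (by rw [← hcon, Prod.mk.eta]; exact heA)
      rw [← hcon, ← this, Prod.mk.eta]
  have hA₂A : A₂ ⊆ A := fun e he => (havoid e he).1
  have huvvw : (u, v) ≠ (v, w) := fun hcon => huv_ne (congrArg Prod.fst hcon)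
  have hins : A = insert (u, v) (insert (v, w) A₂) := by
    rw [hA₂, Finset.insert_erase (Finset.mem_erase.2 ⟨fun hcon => huvvw hcon.symm, hw⟩),
      Finset.insert_erase hu]
  have hvV₀ : v ∉ V₀ := Finset.notMem_erase v V
  have hVins : V = insert v V₀ := (Finset.insert_erase hvV).symm
  have huV₀ : u ∈ V₀ := Finset.mem_erase.2 ⟨huv_ne, huV⟩
  have hwV₀ : w ∈ V₀ := Finset.mem_erase.2 ⟨Ne.symm hvw_ne, hwV⟩
  have hV₀card : 2 ≤ V₀.card := by
    rw [hV₀, Finset.card_erase_of_mem hvV]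
    omega
  have hV₀ne : V₀.Nonempty := Finset.card_pos.1 (by omega)
  have hV₀sub : V₀ ⊆ V := Finset.erase_subset v V
  have hgood₂ : ∀ e ∈ A₂, e.1 ∈ V₀ ∧ e.2 ∈ V₀ ∧ e.1 ≠ e.2 := by
    intro e he
    obtain ⟨heA, h1, h2⟩ := havoid e he
    exact ⟨Finset.mem_erase.2 ⟨h1, (hg.2 _ heA).1⟩, Finset.mem_erase.2 ⟨h2, (hg.2 _ heA).2.1⟩,
      (hg.2 _ heA).2.2⟩
  by_cases hSC0 : StrongConn V₀ A₂
  · -- external reduction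
    refine ⟨v, V₀, A₂, hvV, rfl, ⟨hvV₀, hVins, Or.inr ⟨u, huV₀, w, hwV₀, hins⟩⟩,
      ⟨hV₀ne, hgood₂⟩, hSC0, ?_⟩
    intro a ha hcon
    apply h.2 a (hA₂A ha)
    have hsub2 : A₂.erase a ⊆ A.erase a := fun e he => by
      rw [Finset.mem_erase] at he ⊢
      exact ⟨he.1, hA₂A he.2⟩
    have hauv : (u, v) ∈ A.erase a :=
      Finset.mem_erase.2 ⟨fun hcon2 => (havoid a ha).2.2 (by rw [← hcon2]), hu⟩
    have havw : (v, w) ∈ A.erase a :=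
      Finset.mem_erase.2 ⟨fun hcon2 => (havoid a ha).2.1 (by rw [← hcon2]), hw⟩
    intro x hx y hy
    by_cases hxv : x = v <;> by_cases hyv : y = v
    · subst hxv; subst hyv; exact .refl
    · subst hxv
      exact Relation.ReflTransGen.head havw
        (reach_mono hsub2 (hcon w hwV₀ y (Finset.mem_erase.2 ⟨hyv, hy⟩)))
    · subst hyv
      exact (reach_mono hsub2 (hcon x (Finset.mem_erase.2 ⟨hxv, hx⟩) u huV₀)).tail hauv
    · exact reach_mono hsub2 (hcon x (Finset.mem_erase.2 ⟨hxv, hx⟩) y (Finset.mem_erase.2 ⟨hyv, hy⟩))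
  · -- internal reduction
    have hneq : u ≠ w := by
      intro hcon
      apply hSC0
      intro x hx y hy
      rw [hV₀, Finset.mem_erase] at hx hy
      have hsubF : ∀ e ∈ A, e.1 ≠ v → e.2 ≠ v → (e ∈ A₂ ∨ e = (u, w)) := by
        intro e he h1 h2
        left
        rw [hA₂, Finset.mem_erase, Finset.mem_erase]
        exact ⟨fun hc => h1 (congrArg Prod.fst hc), fun hc => h2 (congrArg Prod.snd hc), he⟩
      have hstep : Reach A₂ u w := by rw [hcon]; exact .refl
      exact (reach_rewrite_fwd hin hout huv_ne hsubF hstep (h.1 x hx.2 y hy.2) hx.1).2 hy.1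
    have huwA : (u, w) ∉ A := by
      intro hcon
      apply h.2 (u, w) hcon
      have huv' : (u, v) ∈ A.erase (u, w) :=
        Finset.mem_erase.2 ⟨fun hc => hvw_ne (congrArg Prod.snd hc), hu⟩
      have hvw' : (v, w) ∈ A.erase (u, w) :=
        Finset.mem_erase.2 ⟨fun hc => huv_ne.symm (congrArg Prod.fst hc), hw⟩
      have hstep : Reach (A.erase (u, w)) u w :=
        Relation.ReflTransGen.head huv' (Relation.ReflTransGen.single hvw')
      have hsubF : ∀ e ∈ A, e.1 ≠ v → e.2 ≠ v → (e ∈ A.erase (u, w) ∨ e = (u, w)) := by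
        intro e he _ _
        by_cases hc : e = (u, w)
        · exact Or.inr hc
        · exact Or.inl (Finset.mem_erase.2 ⟨hc, he⟩)
      intro x hx y hy
      by_cases hxv : x = v <;> by_cases hyv : y = v
      · subst hxv; subst hyv; exact .refl
      · subst hxv
        exact Relation.ReflTransGen.head hvw'
          ((reach_rewrite_fwd hin hout huv_ne hsubF hstep (h.1 w hwV y hy) hvw_ne.symm).2 hyv)
      · rw [hyv]
        exact ((reach_rewrite_fwd hin hout huv_ne hsubF hstep (h.1 x hx v hvV) hxv).1 rfl).tail huv'
      · exact (reach_rewrite_fwd hin hout huv_ne hsubF hstep (h.1 x hx y hy) hxv).2 hyv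
    set A₀ := insert (u, w) A₂ with hA₀
    have huwA₂ : (u, w) ∉ A₂ := fun hc => huwA (hA₂A hc)
    have hA₀e : A₀.erase (u, w) = A₂ := by rw [hA₀, Finset.erase_insert huwA₂]
    have hsubF : ∀ e ∈ A, e.1 ≠ v → e.2 ≠ v → (e ∈ A₀ ∨ e = (u, w)) := by
      intro e he h1 h2
      left
      refine Finset.mem_insert_of_mem ?_
      rw [hA₂, Finset.mem_erase, Finset.mem_erase]
      exact ⟨fun hc => h1 (congrArg Prod.fst hc), fun hc => h2 (congrArg Prod.snd hc), he⟩
    have hstep : Reach A₀ u w := Relation.ReflTransGen.single (Finset.mem_insert_self _ _)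
    have hSC : StrongConn V₀ A₀ := by
      intro x hx y hy
      rw [hV₀, Finset.mem_erase] at hx hy
      exact (reach_rewrite_fwd hin hout huv_ne hsubF hstep (h.1 x hx.2 y hy.2) hx.1).2 hy.1
    refine ⟨v, V₀, A₀, hvV, rfl,
      ⟨hvV₀, hVins, Or.inl ⟨u, w, Finset.mem_insert_self _ _, by rw [hA₀e]; exact hins⟩⟩,
      ⟨hV₀ne, ?_⟩, hSC, ?_⟩
    · intro e he
      rcases Finset.mem_insert.1 he with h1 | h2
      · subst h1
        exact ⟨huV₀, hwV₀, hneq⟩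
      · exact hgood₂ e h2
    · intro a ha hcon
      by_cases hauw : a = (u, w)
      · subst hauw
        rw [hA₀e] at hcon
        exact hSC0 hcon
      · have haA₂ : a ∈ A₂ := Finset.mem_of_mem_insert_of_ne ha hauw
        apply h.2 a (hA₂A haA₂)
        have hauv : (u, v) ∈ A.erase a :=
          Finset.mem_erase.2 ⟨fun hcon2 => (havoid a haA₂).2.2 (by rw [← hcon2]), hu⟩
        have havw : (v, w) ∈ A.erase a :=
          Finset.mem_erase.2 ⟨fun hcon2 => (havoid a haA₂).2.1 (by rw [← hcon2]), hw⟩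
        have hstep2 : Reach (A.erase a) u w :=
          Relation.ReflTransGen.head hauv (Relation.ReflTransGen.single havw)
        have hkey : ∀ {x y : α}, Reach (A₀.erase a) x y → Reach (A.erase a) x y := by
          intro x y hr
          refine reach_subst (u := u) (w := w) ?_ hstep2 hr
          intro e he
          rw [Finset.mem_erase] at he
          rcases Finset.mem_insert.1 he.2 with h1 | h2
          · exact Or.inl h1
          · exact Or.inr (Finset.mem_erase.2 ⟨he.1, hA₂A h2⟩)
        intro x hx y hy
        by_cases hxv : x = v <;> by_cases hyv : y = v
        · subst hxv; subst hyv; exact .refl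
        · subst hxv
          exact Relation.ReflTransGen.head havw
            (hkey (hcon w hwV₀ y (Finset.mem_erase.2 ⟨hyv, hy⟩)))
        · subst hyv
          exact (hkey (hcon x (Finset.mem_erase.2 ⟨hxv, hx⟩) u huV₀)).tail hauv
        · exact hkey (hcon x (Finset.mem_erase.2 ⟨hxv, hx⟩) y (Finset.mem_erase.2 ⟨hyv, hy⟩))


lemma msc_two {V : Finset α} {A : Finset (α × α)} (hg : GoodDigraph V A) (h : MSC V A)
    (hc : V.card = 2) : ∃ a b : α, a ≠ b ∧ V = {a, b} ∧ A = {(a, b), (b, a)} := by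
  obtain ⟨a, b, hab, rfl⟩ := Finset.card_eq_two.1 hc
  refine ⟨a, b, hab, rfl, ?_⟩
  have harc : ∀ {x y : α}, x ≠ y → x ∈ ({a, b} : Finset α) → y ∈ ({a, b} : Finset α) →
      (x, y) ∈ A := by
    intro x y hxy hx hy
    have hr := h.1 x hx y hy
    rcases Relation.ReflTransGen.cases_head hr with h1 | ⟨c, hc1, _⟩
    · exact absurd h1 hxy
    · have hcV := (hg.2 _ hc1).2.1
      have hxc := (hg.2 _ hc1).2.2
      have hcy : c = y := by
        simp only [Finset.mem_insert, Finset.mem_singleton] at hx hy hcV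
        rcases hx with rfl | rfl <;> rcases hy with rfl | rfl <;>
          rcases hcV with rfl | rfl <;> simp_all
      exact hcy ▸ hc1
  have hAB : A ⊆ {(a, b), (b, a)} := by
    intro e he
    obtain ⟨he1, he2, he3⟩ := hg.2 e he
    simp only [Finset.mem_insert, Finset.mem_singleton] at he1 he2 ⊢
    rcases he1 with h1 | h1 <;> rcases he2 with h2 | h2
    · exact absurd (h1.trans h2.symm) he3
    · left; rw [← Prod.mk.eta (p := e), h1, h2]
    · right; rw [← Prod.mk.eta (p := e), h1, h2]
    · exact absurd (h1.trans h2.symm) he3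
  refine Finset.Subset.antisymm hAB ?_
  intro e he
  simp only [Finset.mem_insert, Finset.mem_singleton] at he
  rcases he with rfl | rfl
  · exact harc hab (by simp) (by simp)
  · exact harc (Ne.symm hab) (by simp) (by simp)

lemma main_reduce : ∀ (n : ℕ) (V : Finset α) (A : Finset (α × α)), V.card = n →
    GoodDigraph V A → MSC V A → 2 ≤ V.card →
    ∃ D : ℕ → Finset α × Finset (α × α),
      (∃ a b : α, a ≠ b ∧ (D 0).1 = {a, b} ∧ (D 0).2 = {(a, b), (b, a)}) ∧
      D (V.card - 2) = (V, A) ∧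
      (∀ i < V.card - 2, ∃ v, IsExpansionBy v (D i).1 (D i).2 (D (i + 1)).1 (D (i + 1)).2) ∧
      (∀ i ≤ V.card - 2, MSC (D i).1 (D i).2) := by
  intro n
  induction n using Nat.strong_induction_on with
  | _ n ih =>
    intro V A hcard hg h h2
    by_cases h3 : 3 ≤ V.card
    · obtain ⟨v, V₀, A₀, hvV, hV₀, hexp, hg₀, h₀⟩ := exists_reduction hg h h3
      have hc₀ : V₀.card = V.card - 1 := by rw [hV₀, Finset.card_erase_of_mem hvV]
      obtain ⟨D₀, hD1, hD2, hD3, hD4⟩ := ih (n - 1) (by omega) V₀ A₀ (by omega) hg₀ h₀ (by omega)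
      refine ⟨fun i => if i < V.card - 2 then D₀ i else (V, A), ?_, ?_, ?_, ?_⟩
      · have h0 : (0 : ℕ) < V.card - 2 := by omega
        simp only [if_pos h0]
        exact hD1
      · simp
      · intro i hi
        by_cases hi1 : i + 1 < V.card - 2
        · have := hD3 i (by omega)
          simp only [if_pos hi, if_pos hi1]
          exact this
        · have hiend : i = V₀.card - 2 := by omega
          refine ⟨v, ?_⟩
          have hD2' : D₀ i = (V₀, A₀) := by rw [hiend, (by omega : V₀.card - 2 = V₀.card - 2)]; exact hiend ▸ hD2
          simp only [if_pos hi, if_neg hi1, hD2']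
          exact hexp
      · intro i hi
        by_cases hi0 : i < V.card - 2
        · have := hD4 i (by omega)
          simp only [if_pos hi0]
          exact this
        · simp only [if_neg hi0]
          exact h
    · have hc2 : V.card = 2 := by omega
      obtain ⟨a, b, hab, hV, hA⟩ := msc_two hg h hc2
      refine ⟨fun _ => (V, A), ⟨a, b, hab, hV, hA⟩, rfl, ?_, fun i _ => h⟩
      intro i hi
      exact absurd hi (by omega)

end Helpers

/-- every MSC digraph of order `n ≥ 3` can be obtained from the
2-cycle `C₂` by a sequence of `n - 2` (internal or external) expansions, all
intermediate digraphs being MSC; equivalently, it reduces to `C₂` by `n - 2`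
reductions. -/
theorem stmt_18 {α : Type*} [DecidableEq α] (V : Finset α) (A : Finset (α × α))
    (hg : GoodDigraph V A) (h : MSC V A) (hn : 3 ≤ V.card) :
    ∃ D : ℕ → Finset α × Finset (α × α),
      (∃ a b : α, a ≠ b ∧ (D 0).1 = {a, b} ∧ (D 0).2 = {(a, b), (b, a)}) ∧
      D (V.card - 2) = (V, A) ∧
      (∀ i < V.card - 2, ∃ v, IsExpansionBy v (D i).1 (D i).2 (D (i + 1)).1 (D (i + 1)).2) ∧
      (∀ i ≤ V.card - 2, MSC (D i).1 (D i).2) := by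
  exact main_reduce V.card V A rfl hg h (by omega)
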